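/- Weighted mean contraction (inequality (4.3) verifying condition C2 for the Markov switching model): let |ψ| < 1, p ≥ 1 an integer, C ∈ (0,1), a ≥ 0, b = (1 − |ψ|^p)/(1 − |ψ|), and assume C^p (a b + 1) < 1. Let ε₁,…,ε_p be integrable real random variables with E|ε_k| ≤ a, and for y ∈ ℝ set Y_p = ψ^p y + Σ_{k=0}^{p−1} ψ^k ε_{p−k}. If the random variable log( C^p (|Y_p| + 1)/(|y| + 1) ) is integrable, then E[ log( C^p (|Y_p| + 1)/(|y| + 1) ) ] ≤ log( C^p (a b + 1) ) < 0; in particular sup_{y ∈ ℝ} E[ log( C^p (|Y_p| + 1)/(|y| + 1) ) ] < 0. -/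

import Mathlib

open MeasureTheory

/-- Weighted mean contraction (inequality (4.3) verifying condition C2 for the
Markov switching model): with `|ψ| < 1`, `p ≥ 1`, `C ∈ (0,1)`, `a ≥ 0`,
`b = (1−|ψ|^p)/(1−|ψ|)` and `C^p (ab+1) < 1`, if `E|ε_k| ≤ a` and
`Y_p(y) = ψ^p y + Σ_{k=0}^{p−1} ψ^k ε_{p−k}`, and the log-ratio is integrable, then
`E[log(C^p (|Y_p|+1)/(|y|+1))] ≤ log(C^p (ab+1)) < 0`; in particular
`sup_{y∈ℝ} E[log(C^p (|Y_p|+1)/(|y|+1))] < 0`. -/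
theorem weighted_mean_contraction
    {Ω : Type*} [MeasurableSpace Ω] (μ : Measure Ω) [IsProbabilityMeasure μ]
    (ψ a C : ℝ) (hψ : |ψ| < 1) (p : ℕ) (hp : 1 ≤ p)
    (hC0 : 0 < C) (hC1 : C < 1) (ha : 0 ≤ a)
    (b : ℝ) (hb : b = (1 - |ψ| ^ p) / (1 - |ψ|))
    (hsmall : C ^ p * (a * b + 1) < 1)
    (ε : ℕ → Ω → ℝ)
    (hint : ∀ k, 1 ≤ k → k ≤ p → Integrable (ε k) μ)
    (hbound : ∀ k, 1 ≤ k → k ≤ p → ∫ ω, |ε k ω| ∂μ ≤ a)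
    (Y : ℝ → Ω → ℝ)
    (hY : ∀ y ω, Y y ω = ψ ^ p * y + ∑ k ∈ Finset.range p, ψ ^ k * ε (p - k) ω)
    (hlogint : ∀ y : ℝ,
      Integrable (fun ω => Real.log (C ^ p * (|Y y ω| + 1) / (|y| + 1))) μ) :
    (∀ y : ℝ, ∫ ω, Real.log (C ^ p * (|Y y ω| + 1) / (|y| + 1)) ∂μ
        ≤ Real.log (C ^ p * (a * b + 1))) ∧
    Real.log (C ^ p * (a * b + 1)) < 0 ∧
    (⨆ y : ℝ, ∫ ω, Real.log (C ^ p * (|Y y ω| + 1) / (|y| + 1)) ∂μ) < 0 := by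
  have habs : (0:ℝ) ≤ |ψ| := abs_nonneg ψ
  have hψp1 : |ψ| ^ p ≤ 1 := pow_le_one₀ habs hψ.le
  have hb0 : 0 ≤ b := by
    rw [hb]; apply div_nonneg <;> linarith
  have hab : 0 ≤ a * b := mul_nonneg ha hb0
  have hCp : (0:ℝ) < C ^ p := pow_pos hC0 p
  have hM0 : 0 < C ^ p * (a * b + 1) := by positivity
  have hlogM : Real.log (C ^ p * (a * b + 1)) < 0 := Real.log_neg hM0 hsmall
  have hgeom : ∑ k ∈ Finset.range p, |ψ| ^ k = b := by
    rw [hb, geom_sum_eq (by intro h; rw [h] at hψ; linarith)]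
    rw [div_eq_div_iff (by intro h; apply absurd hψ; nlinarith) (by nlinarith)]
    ring
  have main : ∀ y, ∫ ω, Real.log (C ^ p * (|Y y ω| + 1) / (|y| + 1)) ∂μ
      ≤ Real.log (C ^ p * (a * b + 1)) := by
    intro y
    have hy1 : (0:ℝ) < |y| + 1 := by positivity
    have hYint : Integrable (Y y) μ := by
      have : Y y = fun ω => ψ ^ p * y + ∑ k ∈ Finset.range p, ψ ^ k * ε (p - k) ω := by
        funext ω; exact hY y ω
      rw [this]
      refine (integrable_const _).add ?_
      refine integrable_finset_sum _ fun k hk => ?_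
      have hk' := Finset.mem_range.mp hk
      exact ((hint (p - k) (by omega) (by omega))).const_mul _
    have hdomint : Integrable
        (fun ω => |ψ| ^ p * |y| + ∑ k ∈ Finset.range p, |ψ| ^ k * |ε (p - k) ω|) μ := by
      refine (integrable_const _).add ?_
      refine integrable_finset_sum _ fun k hk => ?_
      have hk' := Finset.mem_range.mp hk
      exact (((hint (p - k) (by omega) (by omega))).abs.const_mul _)
    have hI : ∫ ω, |Y y ω| ∂μ ≤ |ψ| ^ p * |y| + a * b := by
      have step1 : ∫ ω, |Y y ω| ∂μ
          ≤ ∫ ω, (|ψ| ^ p * |y| + ∑ k ∈ Finset.range p, |ψ| ^ k * |ε (p - k) ω|) ∂μ := by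
        refine integral_mono hYint.abs hdomint fun ω => ?_
        rw [hY]
        calc |ψ ^ p * y + ∑ k ∈ Finset.range p, ψ ^ k * ε (p - k) ω|
            ≤ |ψ ^ p * y| + |∑ k ∈ Finset.range p, ψ ^ k * ε (p - k) ω| := abs_add_le _ _
          _ ≤ |ψ| ^ p * |y| + ∑ k ∈ Finset.range p, |ψ| ^ k * |ε (p - k) ω| := by
              gcongr
              · rw [abs_mul, abs_pow]
              · refine (Finset.abs_sum_le_sum_abs _ _).trans ?_
                apply Finset.sum_le_sum
                intro k _
                rw [abs_mul, abs_pow]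
      have step2 : ∫ ω, (|ψ| ^ p * |y| + ∑ k ∈ Finset.range p, |ψ| ^ k * |ε (p - k) ω|) ∂μ
          = |ψ| ^ p * |y| + ∑ k ∈ Finset.range p, |ψ| ^ k * ∫ ω, |ε (p - k) ω| ∂μ := by
        rw [integral_add (integrable_const _)]
        · rw [integral_const]
          simp only [measure_univ, probReal_univ, ENNReal.toReal_one, smul_eq_mul, one_mul]
          congr 1
          rw [integral_finset_sum]
          · exact Finset.sum_congr rfl fun k _ => integral_const_mul _ _
          · intro k hk
            have hk' := Finset.mem_range.mp hk
            exact (((hint (p - k) (by omega) (by omega))).abs.const_mul _)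
        · refine integrable_finset_sum _ fun k hk => ?_
          have hk' := Finset.mem_range.mp hk
          exact (((hint (p - k) (by omega) (by omega))).abs.const_mul _)
      have step3 : ∑ k ∈ Finset.range p, |ψ| ^ k * ∫ ω, |ε (p - k) ω| ∂μ ≤ a * b := by
        calc ∑ k ∈ Finset.range p, |ψ| ^ k * ∫ ω, |ε (p - k) ω| ∂μ
            ≤ ∑ k ∈ Finset.range p, |ψ| ^ k * a := by
              refine Finset.sum_le_sum fun k hk => ?_
              have hk' := Finset.mem_range.mp hk
              exact mul_le_mul_of_nonneg_left (hbound (p - k) (by omega) (by omega))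
                (by positivity)
          _ = a * b := by rw [← Finset.sum_mul, hgeom, mul_comm]
      rw [step2] at step1
      linarith [step3]
    -- the ratio function
    set g : Ω → ℝ := fun ω => C ^ p * (|Y y ω| + 1) / (|y| + 1) with hg
    have hgint : Integrable g μ :=
      ((hYint.abs.add (integrable_const 1)).const_mul (C ^ p)).div_const _
    have hIg : ∫ ω, g ω ∂μ ≤ C ^ p * (a * b + 1) := by
      have : ∫ ω, g ω ∂μ = C ^ p * ((∫ ω, |Y y ω| ∂μ) + 1) / (|y| + 1) := by
        simp only [hg, integral_div, integral_const_mul,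
          integral_add hYint.abs (integrable_const 1), integral_const,
          measure_univ, probReal_univ, ENNReal.toReal_one, smul_eq_mul, one_mul]
      rw [this, div_le_iff₀ hy1]
      nlinarith [hI, abs_nonneg y, mul_nonneg hCp.le (mul_nonneg hab (abs_nonneg y)),
        mul_le_mul_of_nonneg_left hI hCp.le,
        mul_le_mul_of_nonneg_left (mul_le_mul_of_nonneg_right hψp1 (abs_nonneg y)) hCp.le]
    set M := C ^ p * (a * b + 1) with hMdef
    have hgpos : ∀ ω, 0 < g ω := fun ω => by
      have : (0:ℝ) < |Y y ω| + 1 := by positivity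
      positivity
    have hptwise : ∀ ω, Real.log (g ω) ≤ g ω / M - 1 + Real.log M := fun ω => by
      have h1 : Real.log (g ω / M) ≤ g ω / M - 1 :=
        Real.log_le_sub_one_of_pos (div_pos (hgpos ω) hM0)
      rw [Real.log_div (hgpos ω).ne' hM0.ne'] at h1
      linarith
    have hrhsint : Integrable (fun ω => g ω / M - 1 + Real.log M) μ :=
      (((hgint.div_const M).sub (integrable_const 1)).add (integrable_const _))
    calc ∫ ω, Real.log (g ω) ∂μ ≤ ∫ ω, (g ω / M - 1 + Real.log M) ∂μ :=
          integral_mono (hlogint y) hrhsint hptwise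
      _ = (∫ ω, g ω ∂μ) / M - 1 + Real.log M := by
          have heq : (fun ω => g ω / M - 1 + Real.log M)
              = fun ω => g ω / M + (Real.log M - 1) := by funext ω; ring
          rw [heq, integral_add (hgint.div_const M) (integrable_const _), integral_div,
            integral_const]
          simp [measure_univ]
          ring
      _ ≤ Real.log M := by
          have : (∫ ω, g ω ∂μ) / M ≤ 1 := (div_le_one hM0).mpr hIg
          linarith
  refine ⟨main, hlogM, ?_⟩
  exact lt_of_le_of_lt (ciSup_le main) hlogM
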